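/- Let X be a compact subset of a Banach space B with thickness exponent τ(X) < 1, and let τ ∈ (τ(X), 1) and β_τ = 1/(1 − τ). Then there is a constant C > 0 such that for every n ∈ ℕ there exist m_n ≤ C·2^{β_τ n τ} and a bounded linear map φ_n : B → ℝ^{m_n} with ‖φ_n‖ ≤ √(m_n) satisfying |φ_n(x − y)| ≥ 2^{−(β_τ n + 1)} whenever x, y ∈ X with ‖x − y‖ ≥ 2^{−n}. -/

import Mathlib

open Filter Metric Set Pointwise Topology

/-- `coverNum X ε` : minimal number of balls of radius `ε` with centres in `X` covering `X`. -/
noncomputable def coverNum {E : Type*} [SeminormedAddCommGroup E] (X : Set E) (ε : ℝ) : ℕ∞ :=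
  sInf {n : ℕ∞ | ∃ F : Finset E, ↑F ⊆ X ∧ (X ⊆ ⋃ c ∈ F, Metric.ball c ε) ∧ n = F.card}

/-- extended logarithm of an extended natural number. -/
noncomputable def elog (n : ℕ∞) : EReal :=
  if n = ⊤ then ⊤ else ((Real.log n.toNat : ℝ) : EReal)

/-- The upper box-counting dimension `d_B(X) = limsup_{ε → 0⁺} log N(X,ε) / (-log ε)`. -/
noncomputable def dimBox {E : Type*} [SeminormedAddCommGroup E] (X : Set E) : EReal :=
  Filter.limsup (fun ε : ℝ => elog (coverNum X ε) / ((-Real.log ε : ℝ) : EReal)) (𝓝[>] 0)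

/-- `thickNum X ε` : smallest dimension of a finite-dimensional subspace `V` with
`dist(x, V) ≤ ε` for all `x ∈ X` (`⊤` if none exists). -/
noncomputable def thickNum {E : Type*} [NormedAddCommGroup E] [NormedSpace ℝ E]
    (X : Set E) (ε : ℝ) : ℕ∞ :=
  sInf {n : ℕ∞ | ∃ V : Submodule ℝ E, FiniteDimensional ℝ V ∧ n = Module.finrank ℝ V ∧
    ∀ x ∈ X, Metric.infDist x (V : Set E) ≤ ε}

/-- The thickness exponent `τ(X) = limsup_{ε → 0⁺} log d(X,ε) / (-log ε)`. -/
noncomputable def thickness {E : Type*} [NormedAddCommGroup E] [NormedSpace ℝ E]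
    (X : Set E) : EReal :=
  Filter.limsup (fun ε : ℝ => elog (thickNum X ε) / ((-Real.log ε : ℝ) : EReal)) (𝓝[>] 0)

/-- `dualThickNum X θ ε` : minimal dimension of a subspace `U ⊆ E*` such that for all
`x, y ∈ X` with `‖x - y‖ ≥ ε` some `φ ∈ U` has `|φ(x-y)| ≥ ε^(1+θ)`. -/
noncomputable def dualThickNum {E : Type*} [NormedAddCommGroup E] [NormedSpace ℝ E]
    (X : Set E) (θ ε : ℝ) : ℕ∞ :=
  sInf {n : ℕ∞ | ∃ U : Submodule ℝ (E →L[ℝ] ℝ), FiniteDimensional ℝ U ∧ n = Module.finrank ℝ U ∧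
    ∀ x ∈ X, ∀ y ∈ X, ε ≤ ‖x - y‖ → ∃ φ ∈ U, ε ^ (1 + θ) ≤ |φ (x - y)|}

noncomputable def dualThickTheta {E : Type*} [NormedAddCommGroup E] [NormedSpace ℝ E]
    (X : Set E) (θ : ℝ) : EReal :=
  Filter.limsup (fun ε : ℝ => elog (dualThickNum X θ ε) / ((-Real.log ε : ℝ) : EReal)) (𝓝[>] 0)

/-- The dual thickness `τ*(X) = lim_{θ → 0⁺} τ*_θ(X)` (the limit exists by monotonicity and
equals the limsup as `θ → 0⁺`). -/
noncomputable def dualThickness {E : Type*} [NormedAddCommGroup E] [NormedSpace ℝ E]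
    (X : Set E) : EReal :=
  Filter.limsup (fun θ : ℝ => dualThickTheta X θ) (𝓝[>] 0)

/-- `sigmaNum X α ε` : minimal dimension of a subspace `V ⊆ E*` such that whenever
`x, y ∈ X` with `‖x - y‖ ≥ ε` there is `Φ ∈ V` with `‖Φ‖ = 1` and `|Φ(x-y)| ≥ α ε`. -/
noncomputable def sigmaNum {E : Type*} [NormedAddCommGroup E] [NormedSpace ℝ E]
    (X : Set E) (α ε : ℝ) : ℕ∞ :=
  sInf {n : ℕ∞ | ∃ V : Submodule ℝ (E →L[ℝ] ℝ), FiniteDimensional ℝ V ∧ n = Module.finrank ℝ V ∧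
    ∀ x ∈ X, ∀ y ∈ X, ε ≤ ‖x - y‖ → ∃ Φ ∈ V, ‖Φ‖ = 1 ∧ α * ε ≤ |Φ (x - y)|}

noncomputable def sigmaExp {E : Type*} [NormedAddCommGroup E] [NormedSpace ℝ E]
    (X : Set E) (α : ℝ) : EReal :=
  Filter.limsup (fun ε : ℝ => elog (sigmaNum X α ε) / ((-Real.log ε : ℝ) : EReal)) (𝓝[>] 0)

section Helpers
open Module Function


theorem auerbach_dual {B : Type*} [NormedAddCommGroup B] [NormedSpace ℝ B]
    (V : Submodule ℝ B) [FiniteDimensional ℝ V] :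
    ∃ f : Fin (finrank ℝ V) → (B →L[ℝ] ℝ), (∀ i, ‖f i‖ ≤ 1) ∧
      ∀ u ∈ V, ‖u‖ ≤ ∑ i, |f i u| := by
  by_cases hd : finrank ℝ V = 0
  · refine ⟨fun _ => 0, fun i => by simp, fun u hu => ?_⟩
    have : V = ⊥ := Submodule.finrank_eq_zero.mp hd
    rw [this, Submodule.mem_bot] at hu
    simp [hu]
  have hd0 : 0 < finrank ℝ V := Nat.pos_of_ne_zero hd
  haveI : Nontrivial V := Module.nontrivial_of_finrank_pos hd0
  set d := finrank ℝ V with hdd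
  let b : Basis (Fin d) ℝ V := finBasis ℝ V
  let F : (Fin d → V) → ℝ := fun v => b.det v
  have hFcont : Continuous F := by
    have : F = fun v => Matrix.det (Matrix.of fun i j => b.repr (v j) i) := by
      funext v
      show b.det v = _
      rw [Basis.det_apply]
      rfl
    rw [this]
    apply Continuous.matrix_det
    apply continuous_matrix
    intro i j
    exact ((b.coord i).continuous_of_finiteDimensional).comp (continuous_apply j)
  set S : Set (Fin d → V) := Set.univ.pi (fun _ => Metric.sphere (0:V) 1) with hS
  have hScompact : IsCompact S := isCompact_univ_pi fun _ => isCompact_sphere 0 1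
  have hmemS : ∀ v : Fin d → V, (∀ i, ‖v i‖ = 1) → v ∈ S := by
    intro v hv
    intro i _
    simpa [mem_sphere_zero_iff_norm] using hv i
  have hSne : S.Nonempty := by
    obtain ⟨v, hv⟩ := exists_ne (0 : V)
    refine ⟨fun _ => ‖v‖⁻¹ • v, hmemS _ fun i => norm_smul_inv_norm hv⟩
  obtain ⟨e, heS, hmax⟩ := hScompact.exists_isMaxOn hSne
    (continuous_abs.comp hFcont).continuousOn
  have he_norm : ∀ i, ‖e i‖ = 1 := by
    intro i
    have := heS i (mem_univ i)
    simpa [mem_sphere_zero_iff_norm] using this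
  have hFe : F e ≠ 0 := by
    have hw : (fun i => ‖(b i : V)‖⁻¹ • b i) ∈ S := by
      apply hmemS
      intro i
      exact norm_smul_inv_norm (b.ne_zero i)
    have hFw : F (fun i => ‖(b i : V)‖⁻¹ • b i) = ∏ i, ‖(b i : V)‖⁻¹ := by
      show b.det _ = _
      have := b.det.toMultilinearMap.map_smul_univ (fun i => ‖(b i : V)‖⁻¹) ⇑b
      simpa [b.det_self] using this
    have hprod : (0:ℝ) < ∏ i, ‖(b i : V)‖⁻¹ :=
      Finset.prod_pos fun i _ => inv_pos.mpr (norm_pos_iff.mpr (b.ne_zero i))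
    intro h
    have h2 := hmax hw
    simp only [Function.comp_apply, h, abs_zero] at h2
    have h3 : |F (fun i => ‖(b i : V)‖⁻¹ • b i)| ≤ 0 := h2
    rw [hFw, abs_of_pos hprod] at h3
    linarith
  -- the dual functionals on V
  let g : Fin d → (V →ₗ[ℝ] ℝ) := fun i => (F e)⁻¹ • (b.det.toMultilinearMap.toLinearMap e i)
  have hgapp : ∀ i u, g i u = (F e)⁻¹ * F (update e i u) := fun i u => rfl
  have hgb : ∀ i (u : V), |g i u| ≤ ‖u‖ := by
    intro i u
    rcases eq_or_ne u 0 with rfl | hu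
    · simp
    · have hu' : update e i (‖u‖⁻¹ • u) ∈ S := by
        apply hmemS
        intro j
        rcases eq_or_ne j i with rfl | hj
        · rw [update_self]
          exact norm_smul_inv_norm hu
        · rw [update_of_ne hj]
          exact he_norm j
      have hle : |F (update e i (‖u‖⁻¹ • u))| ≤ |F e| := hmax hu'
      have hsmul : F (update e i u) = ‖u‖ * F (update e i (‖u‖⁻¹ • u)) := by
        have : u = ‖u‖ • (‖u‖⁻¹ • u) := by
          rw [smul_smul, mul_inv_cancel₀ (norm_ne_zero_iff.mpr hu), one_smul]
        calc F (update e i u) = F (update e i (‖u‖ • (‖u‖⁻¹ • u))) := by rw [← this]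
        _ = ‖u‖ * F (update e i (‖u‖⁻¹ • u)) :=
          b.det.toMultilinearMap.map_update_smul e i ‖u‖ (‖u‖⁻¹ • u)
      rw [hgapp, hsmul, abs_mul, abs_mul, abs_norm]
      calc |(F e)⁻¹| * (‖u‖ * |F (update e i (‖u‖⁻¹ • u))|)
          ≤ |(F e)⁻¹| * (‖u‖ * |F e|) := by
            apply mul_le_mul_of_nonneg_left _ (abs_nonneg _)
            exact mul_le_mul_of_nonneg_left hle (norm_nonneg u)
        _ = ‖u‖ * (|F e|⁻¹ * |F e|) := by rw [abs_inv]; ring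
        _ = ‖u‖ := by rw [inv_mul_cancel₀ (abs_ne_zero.mpr hFe), mul_one]
  have hdelta : ∀ i j, g i (e j) = if i = j then 1 else 0 := by
    intro i j
    rcases eq_or_ne i j with rfl | hij
    · rw [if_pos rfl, hgapp, update_eq_self, inv_mul_cancel₀ hFe]
    · simp only [if_neg hij]
      rw [hgapp]
      have : F (update e i (e j)) = 0 := by
        apply b.det.map_eq_zero_of_eq (update e i (e j)) (i := i) (j := j)
        · rw [update_self, update_of_ne (Ne.symm hij)]
        · exact hij
      rw [this, mul_zero]
  -- e is a basis
  have hunit : IsUnit (b.det e) := isUnit_iff_ne_zero.mpr hFe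
  obtain ⟨hli, hspan⟩ := (Module.Basis.is_basis_iff_det b).mpr hunit
  let e' : Basis (Fin d) ℝ V := Basis.mk hli hspan.ge
  have he' : ⇑e' = e := Basis.coe_mk hli hspan.ge
  have hsum : ∀ u : V, (∑ i, g i u • e i) = u := by
    let T : V →ₗ[ℝ] V := ∑ i, (g i).smulRight (e i)
    have hT : T = LinearMap.id := by
      apply e'.ext
      intro j
      rw [he']
      simp only [T, LinearMap.sum_apply, LinearMap.smulRight_apply, LinearMap.id_apply]
      rw [Finset.sum_eq_single j]
      · rw [hdelta j j, if_pos rfl, one_smul]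
      · intro i _ hij
        rw [hdelta i j, if_neg hij, zero_smul]
      · intro h; exact absurd (Finset.mem_univ j) h
    intro u
    have := congrArg (fun f => f u) hT
    simpa [T] using this
  have hVbound : ∀ u : V, ‖u‖ ≤ ∑ i, |g i u| := by
    intro u
    conv_lhs => rw [← hsum u]
    refine (norm_sum_le _ _).trans ?_
    apply Finset.sum_le_sum
    intro i _
    rw [norm_smul, Real.norm_eq_abs, he_norm i, mul_one]
  -- continuous versions and Hahn-Banach extensions
  let gc : Fin d → (V →L[ℝ] ℝ) := fun i =>
    LinearMap.mkContinuous (g i) 1 (by intro u; simpa using hgb i u)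
  have hgcnorm : ∀ i, ‖gc i‖ ≤ 1 := fun i =>
    LinearMap.mkContinuous_norm_le _ zero_le_one _
  have hext : ∀ i, ∃ f : B →L[ℝ] ℝ, (∀ x : V, f x = gc i x) ∧ ‖f‖ = ‖gc i‖ := fun i =>
    exists_extension_norm_eq V (gc i)
  choose f hf hfnorm using hext
  refine ⟨f, fun i => (hfnorm i).le.trans (hgcnorm i), fun u hu => ?_⟩
  have : ∀ i, f i u = g i ⟨u, hu⟩ := fun i => hf i ⟨u, hu⟩
  calc ‖u‖ = ‖(⟨u, hu⟩ : V)‖ := rfl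
  _ ≤ ∑ i, |g i ⟨u, hu⟩| := hVbound _
  _ = ∑ i, |f i u| := by simp_rw [this]


theorem exists_phi {B : Type*} [NormedAddCommGroup B] [NormedSpace ℝ B]
    (m : ℕ) (f : Fin m → (B →L[ℝ] ℝ)) (hf : ∀ i, ‖f i‖ ≤ 1) :
    ∃ φ : B →L[ℝ] EuclideanSpace ℝ (Fin m), ‖φ‖ ≤ Real.sqrt m ∧
      ∀ (z : B) (i : Fin m), |f i z| ≤ ‖φ z‖ := by
  let φ : B →L[ℝ] EuclideanSpace ℝ (Fin m) :=
    (PiLp.continuousLinearEquiv 2 ℝ (fun _ : Fin m => ℝ)).symm.toContinuousLinearMap.comp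
      (ContinuousLinearMap.pi f)
  have hφapp : ∀ (z : B) (i : Fin m), φ z i = f i z := fun z i => rfl
  have hnorm : ∀ z : B, ‖φ z‖ = Real.sqrt (∑ i, |f i z| ^ 2) := by
    intro z
    rw [EuclideanSpace.norm_eq]
    congr 1
  refine ⟨φ, ?_, ?_⟩
  · apply ContinuousLinearMap.opNorm_le_bound _ (Real.sqrt_nonneg _)
    intro z
    rw [hnorm]
    have h1 : ∑ i, |f i z| ^ 2 ≤ (m : ℝ) * ‖z‖ ^ 2 := by
      calc ∑ i, |f i z| ^ 2 ≤ ∑ _i : Fin m, ‖z‖ ^ 2 := by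
            apply Finset.sum_le_sum
            intro i _
            apply pow_le_pow_left₀ (abs_nonneg _)
            calc |f i z| = ‖f i z‖ := (Real.norm_eq_abs _).symm
            _ ≤ ‖f i‖ * ‖z‖ := (f i).le_opNorm z
            _ ≤ 1 * ‖z‖ := by
                apply mul_le_mul_of_nonneg_right (hf i) (norm_nonneg z)
            _ = ‖z‖ := one_mul _
      _ = (m : ℝ) * ‖z‖ ^ 2 := by simp [Finset.sum_const, nsmul_eq_mul]
    calc Real.sqrt (∑ i, |f i z| ^ 2) ≤ Real.sqrt ((m : ℝ) * ‖z‖ ^ 2) :=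
          Real.sqrt_le_sqrt h1
    _ = Real.sqrt m * ‖z‖ := by
        rw [Real.sqrt_mul (Nat.cast_nonneg m), Real.sqrt_sq (norm_nonneg z)]
  · intro z i
    rw [hnorm]
    have h2 : |f i z| ^ 2 ≤ ∑ j, |f j z| ^ 2 :=
      Finset.single_le_sum (f := fun j => |f j z| ^ 2) (fun j _ => sq_nonneg _)
        (Finset.mem_univ i)
    calc |f i z| = Real.sqrt (|f i z| ^ 2) := by
          rw [Real.sqrt_sq (abs_nonneg _)]
    _ ≤ Real.sqrt (∑ j, |f j z| ^ 2) := Real.sqrt_le_sqrt h2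


theorem exists_net_functionals {B : Type*} [NormedAddCommGroup B] [NormedSpace ℝ B]
    (K : Set B) (hK : IsCompact K) (a : ℝ) (ha : 0 < a) (haK : ∀ z ∈ K, a ≤ ‖z‖) :
    ∃ (m : ℕ) (f : Fin m → (B →L[ℝ] ℝ)), (∀ i, ‖f i‖ ≤ 1) ∧
      ∀ z ∈ K, ∃ i, a / 2 ≤ |f i z| := by
  have hcover : K ⊆ ⋃ c ∈ K, Metric.ball c (a / 2) := by
    intro z hz
    exact Set.mem_biUnion hz (Metric.mem_ball_self (by linarith))
  obtain ⟨b', hb'K, hb'fin, hb'cover⟩ := hK.elim_finite_subcover_image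
    (fun c _ => Metric.isOpen_ball) hcover
  let t : Finset B := hb'fin.toFinset
  have htK : ∀ c ∈ t, c ∈ K := by
    intro c hc
    exact hb'K (hb'fin.mem_toFinset.mp hc)
  have hne : ∀ c ∈ t, c ≠ 0 := by
    intro c hc h0
    have := haK c (htK c hc)
    rw [h0, norm_zero] at this
    linarith
  set m := t.card with hm
  let enum : t ≃ Fin m := t.equivFin
  have hdual : ∀ i : Fin m, ∃ g : B →L[ℝ] ℝ, ‖g‖ = 1 ∧
      g ((enum.symm i : t) : B) = ‖((enum.symm i : t) : B)‖ := by
    intro i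
    exact exists_dual_vector ℝ _ (norm_ne_zero_iff.mpr (hne _ (enum.symm i).2))
  choose f hf1 hf2 using hdual
  refine ⟨m, f, fun i => (hf1 i).le, ?_⟩
  intro z hz
  have hz' := hb'cover hz
  rw [Set.mem_iUnion₂] at hz'
  obtain ⟨c, hc, hzc⟩ := hz'
  have hct : c ∈ t := hb'fin.mem_toFinset.mpr hc
  refine ⟨enum ⟨c, hct⟩, ?_⟩
  set i := enum ⟨c, hct⟩ with hi
  have hcs : ((enum.symm i : t) : B) = c := by rw [hi, Equiv.symm_apply_apply]
  have h1 : f i c = ‖c‖ := by rw [← hcs]; exact hf2 i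
  have h2 : ‖c‖ ≥ a := haK c (htK c hct)
  have h3 : |f i z - f i c| ≤ ‖z - c‖ := by
    rw [← map_sub]
    calc |f i (z - c)| = ‖f i (z - c)‖ := (Real.norm_eq_abs _).symm
    _ ≤ ‖f i‖ * ‖z - c‖ := (f i).le_opNorm _
    _ = ‖z - c‖ := by rw [hf1 i, one_mul]
  have h4 : ‖z - c‖ < a / 2 := by
    rw [← dist_eq_norm]
    exact Metric.mem_ball.mp hzc
  have := abs_sub_abs_le_abs_sub (f i c) (f i z)
  rw [abs_sub_comm] at this
  have h5 : |f i c| = ‖c‖ := by rw [h1, abs_norm]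
  nlinarith [abs_nonneg (f i z), abs_sub_abs_le_abs_sub (f i c) (f i z)]

theorem sInf_attain {S : Set ℕ∞} (h : sInf S ≠ ⊤) : ∃ s ∈ S, s ≤ sInf S := by
  by_contra hc
  push_neg at hc
  have h1 : sInf S + 1 ≤ sInf S := by
    apply le_sInf
    intro s hs
    exact Order.add_one_le_of_lt (hc s hs)
  have h2 : sInf S < sInf S + 1 := (ENat.lt_add_one_iff h).mpr le_rfl
  exact absurd (h1.trans_lt h2) (lt_irrefl _)

theorem thickNum_poly_bound {B : Type*} [NormedAddCommGroup B] [NormedSpace ℝ B]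
    (X : Set B) (τ'' : ℝ) (h : thickness X < (τ'' : EReal)) :
    ∃ ε₀ : ℝ, 0 < ε₀ ∧ ε₀ ≤ 1 ∧ ∀ ε : ℝ, 0 < ε → ε < ε₀ →
      ∃ V : Submodule ℝ B, FiniteDimensional ℝ V ∧
        ((Module.finrank ℝ V : ℝ) ≤ ε ^ (-τ'')) ∧
        ∀ x ∈ X, Metric.infDist x (V : Set B) ≤ ε := by
  have hev : ∀ᶠ ε in 𝓝[>] (0:ℝ),
      elog (thickNum X ε) / ((-Real.log ε : ℝ) : EReal) < (τ'' : EReal) :=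
    eventually_lt_of_limsup_lt h
  rw [eventually_iff, mem_nhdsGT_iff_exists_Ioo_subset] at hev
  obtain ⟨u, hu, hsub⟩ := hev
  refine ⟨min u 1, lt_min (Set.mem_Ioi.mp hu) one_pos, min_le_right _ _, ?_⟩
  intro ε hε hε'
  have hεu : ε ∈ Set.Ioo (0:ℝ) u := ⟨hε, hε'.trans_le (min_le_left _ _)⟩
  have hlt := hsub hεu
  rw [Set.mem_setOf_eq] at hlt
  have hε1 : ε < 1 := hε'.trans_le (min_le_right _ _)
  have hlog : (0:ℝ) < -Real.log ε := by
    have := Real.log_neg hε hε1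
    linarith
  -- from division bound to product bound
  have hle : elog (thickNum X ε) ≤ ((-Real.log ε : ℝ) : EReal) * (τ'' : EReal) := by
    rw [← EReal.div_le_iff_le_mul (b := ((-Real.log ε : ℝ) : EReal))
      (by exact_mod_cast hlog) (EReal.coe_ne_top _)]
    exact hlt.le
  have hrhs : ((-Real.log ε : ℝ) : EReal) * (τ'' : EReal) = ((τ'' * (-Real.log ε) : ℝ) : EReal) := by
    rw [← EReal.coe_mul]
    norm_cast
    ring
  rw [hrhs] at hle
  -- thickNum is not ⊤
  have hntop : thickNum X ε ≠ ⊤ := by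
    intro htop
    rw [elog, if_pos htop] at hle
    exact absurd hle (not_le.mpr (EReal.coe_lt_top _))
  -- real bound on toNat
  have hreal : ((thickNum X ε).toNat : ℝ) ≤ ε ^ (-τ'') := by
    rw [elog, if_neg hntop] at hle
    have hle' : Real.log ((thickNum X ε).toNat : ℝ) ≤ τ'' * (-Real.log ε) :=
      EReal.coe_le_coe_iff.mp hle
    have hexp : ε ^ (-τ'') = Real.exp (τ'' * (-Real.log ε)) := by
      rw [Real.rpow_def_of_pos hε]
      ring_nf
    rw [hexp]
    rcases Nat.eq_zero_or_pos (thickNum X ε).toNat with h0 | hpos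
    · rw [h0]
      simp [Real.exp_pos _ |>.le]
    · have : (0:ℝ) < ((thickNum X ε).toNat : ℝ) := by exact_mod_cast hpos
      exact (Real.log_le_iff_le_exp this).mp hle'
  -- extract the subspace
  obtain ⟨s, hsS, hs_le⟩ := sInf_attain (S := {n : ℕ∞ | ∃ V : Submodule ℝ B,
    FiniteDimensional ℝ V ∧ n = Module.finrank ℝ V ∧
    ∀ x ∈ X, Metric.infDist x (V : Set B) ≤ ε}) hntop
  obtain ⟨V, hVfd, hVrank, hVdist⟩ := hsS
  refine ⟨V, hVfd, ?_, hVdist⟩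
  have h1 : (Module.finrank ℝ V : ℕ∞) ≤ thickNum X ε := hVrank ▸ hs_le
  have h2 : Module.finrank ℝ V ≤ (thickNum X ε).toNat := by
    rwa [← ENat.coe_toNat hntop, Nat.cast_le] at h1
  calc (Module.finrank ℝ V : ℝ) ≤ ((thickNum X ε).toNat : ℝ) := by exact_mod_cast h2
  _ ≤ ε ^ (-τ'') := hreal

theorem elog_nonneg (n : ℕ∞) : (0 : EReal) ≤ elog n := by
  rw [elog]
  split_ifs with h
  · exact le_top
  · rcases Nat.eq_zero_or_pos n.toNat with h0 | hpos
    · rw [h0]; simp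
    · have : (0:ℝ) ≤ Real.log n.toNat :=
        Real.log_nonneg (by exact_mod_cast hpos)
      exact_mod_cast this

theorem thickness_nonneg {E : Type*} [NormedAddCommGroup E] [NormedSpace ℝ E]
    (X : Set E) : (0 : EReal) ≤ thickness X := by
  apply le_limsup_of_frequently_le'
  apply Eventually.frequently
  filter_upwards [Ioo_mem_nhdsGT_of_mem (by norm_num : (0:ℝ) ∈ Set.Ico 0 1)] with ε hε
  have hlog : (0:ℝ) < -Real.log ε := by
    have := Real.log_neg hε.1 hε.2
    linarith
  apply EReal.div_nonneg (elog_nonneg _)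
  exact_mod_cast hlog.le

end Helpers

set_option maxHeartbeats 1000000 in
/-- for `τ(X) < τ < 1` and `β = 1/(1-τ)`, there are linear maps
`φ_n : B → ℝ^{m_n}` with `m_n ≤ C 2^{β n τ}`, `‖φ_n‖ ≤ √m_n` and
`|φ_n(x-y)| ≥ 2^{-(βn+1)}` whenever `x, y ∈ X`, `‖x - y‖ ≥ 2^{-n}`. -/
theorem exists_finite_rank_separating_maps_of_thickness {B : Type*}
    [NormedAddCommGroup B] [NormedSpace ℝ B] [CompleteSpace B]
    (X : Set B) (hX : IsCompact X) (hτX : thickness X < (1 : EReal))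
    (τ : ℝ) (hτ₁ : thickness X < (τ : EReal)) (hτ₂ : τ < 1) :
    ∃ C > (0 : ℝ), ∀ n : ℕ, ∃ m : ℕ,
      (m : ℝ) ≤ C * (2 : ℝ) ^ ((1 / (1 - τ)) * (n : ℝ) * τ) ∧
      ∃ φ : B →L[ℝ] EuclideanSpace ℝ (Fin m),
        ‖φ‖ ≤ Real.sqrt m ∧
        ∀ x ∈ X, ∀ y ∈ X, (2 : ℝ) ^ (-(n : ℝ)) ≤ ‖x - y‖ →
          (2 : ℝ) ^ (-((1 / (1 - τ)) * (n : ℝ) + 1)) ≤ ‖φ (x - y)‖ := by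

  classical
  have h1τ : (0:ℝ) < 1 - τ := by linarith
  set β : ℝ := 1 / (1 - τ) with hβdef
  have hβpos : 0 < β := by positivity
  have hβ1 : β * (1 - τ) = 1 := by
    rw [hβdef]; field_simp
  have hτpos : 0 < τ := by
    have h0 : ((0:ℝ) : EReal) < (τ : EReal) := by
      rw [EReal.coe_zero]
      exact lt_of_le_of_lt (thickness_nonneg X) hτ₁
    exact_mod_cast h0
  have hβge1 : 1 ≤ β := by
    rw [hβdef, le_div_iff₀ h1τ]; linarith
  have hβeq : β = 1 + τ * β := by nlinarith [hβ1]
  have hrp : ∀ {a b : ℝ}, a ≤ b → (2:ℝ) ^ a ≤ (2:ℝ) ^ b :=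
    fun h => Real.rpow_le_rpow_of_exponent_le one_le_two h
  have hrpos : ∀ r : ℝ, (0:ℝ) < (2:ℝ) ^ r := fun r => Real.rpow_pos_of_pos two_pos r
  -- choose τ'' strictly between thickness X and τ
  have hne_top : thickness X ≠ ⊤ := (hτ₁.trans (EReal.coe_lt_top τ)).ne
  have hne_bot : thickness X ≠ ⊥ := by
    intro h
    have := thickness_nonneg X
    rw [h] at this
    exact absurd this (by simp)
  set t : ℝ := (thickness X).toReal with htdef
  have hthick_eq : thickness X = (t : EReal) := (EReal.coe_toReal hne_top hne_bot).symm
  have ht_lt : t < τ := by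
    rw [hthick_eq] at hτ₁; exact_mod_cast hτ₁
  have ht0 : 0 ≤ t := by
    have := thickness_nonneg X
    rw [hthick_eq] at this
    exact_mod_cast this
  set τ'' : ℝ := (t + τ) / 2 with hτ''def
  have hτ''0 : 0 ≤ τ'' := by rw [hτ''def]; linarith
  have hτ''τ : τ'' < τ := by rw [hτ''def]; linarith
  have hτ''1 : τ'' < 1 := by linarith
  have hthick'' : thickness X < (τ'' : EReal) := by
    rw [hthick_eq]
    exact_mod_cast (by linarith : t < τ'')
  obtain ⟨ε₀, hε₀pos, hε₀le1, hε₀⟩ := thickNum_poly_bound X τ'' hthick''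
  -- claim_all : a separating map for every n, with uncontrolled dimension
  have claim_all : ∀ n : ℕ, ∃ m : ℕ, ∃ φ : B →L[ℝ] EuclideanSpace ℝ (Fin m),
      ‖φ‖ ≤ Real.sqrt m ∧
      ∀ x ∈ X, ∀ y ∈ X, (2:ℝ) ^ (-(n:ℝ)) ≤ ‖x - y‖ →
        (2:ℝ) ^ (-(β * (n:ℝ) + 1)) ≤ ‖φ (x - y)‖ := by
    intro n
    set a : ℝ := (2:ℝ) ^ (-(n:ℝ)) with ha
    have hapos : 0 < a := hrpos _
    have hKc : IsCompact {z : B | z ∈ (fun p : B × B => p.1 - p.2) '' (X ×ˢ X) ∧ a ≤ ‖z‖} := by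
      have himg : IsCompact ((fun p : B × B => p.1 - p.2) '' (X ×ˢ X)) :=
        (hX.prod hX).image (continuous_fst.sub continuous_snd)
      have hcl : IsClosed {z : B | a ≤ ‖z‖} := isClosed_le continuous_const continuous_norm
      exact himg.inter_right hcl
    obtain ⟨m, f, hf1, hf2⟩ := exists_net_functionals _ hKc a hapos (fun z hz => hz.2)
    obtain ⟨φ, hφn, hφc⟩ := exists_phi m f hf1
    refine ⟨m, φ, hφn, ?_⟩
    intro x hx y hy hxy
    have hzK : (x - y) ∈ {z : B | z ∈ (fun p : B × B => p.1 - p.2) '' (X ×ˢ X) ∧ a ≤ ‖z‖} :=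
      ⟨⟨(x, y), Set.mk_mem_prod hx hy, rfl⟩, hxy⟩
    obtain ⟨i, hi⟩ := hf2 _ hzK
    refine le_trans ?_ (hi.trans (hφc (x - y) i))
    have h2 : (2:ℝ) ^ (-(n:ℝ) - 1) = a / 2 := by
      rw [Real.rpow_sub two_pos, Real.rpow_one, ha]
    rw [← h2]
    apply hrp
    have : (n:ℝ) ≤ β * n := le_mul_of_one_le_left (Nat.cast_nonneg n) hβge1
    linarith
  choose M hM using claim_all
  set n₁ : ℕ := ⌈1 / ε₀⌉₊ with hn₁def
  set n₂ : ℕ := ⌈(3 * τ'' + 1) / ((τ - τ'') * β)⌉₊ with hn₂def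
  set n₀ : ℕ := max n₁ n₂ with hn₀def
  set C : ℝ := 8 + ∑ k ∈ Finset.range n₀, (M k : ℝ) with hCdef
  have hsum_nonneg : 0 ≤ ∑ k ∈ Finset.range n₀, (M k : ℝ) :=
    Finset.sum_nonneg fun k _ => Nat.cast_nonneg _
  have hC8 : 8 ≤ C := by rw [hCdef]; linarith
  have hCpos : 0 < C := by linarith
  refine ⟨C, hCpos, ?_⟩
  intro n
  have hexp0 : 0 ≤ β * (n:ℝ) * τ :=
    mul_nonneg (mul_nonneg hβpos.le (Nat.cast_nonneg n)) hτpos.le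
  have hone_le : (1:ℝ) ≤ (2:ℝ) ^ (β * (n:ℝ) * τ) := by
    calc (1:ℝ) = (2:ℝ) ^ (0:ℝ) := (Real.rpow_zero 2).symm
    _ ≤ _ := hrp hexp0
  by_cases hn : n < n₀
  · refine ⟨M n, ?_, hM n⟩
    have h1 : (M n : ℝ) ≤ ∑ k ∈ Finset.range n₀, (M k : ℝ) :=
      Finset.single_le_sum (f := fun k => (M k : ℝ)) (fun k _ => Nat.cast_nonneg _)
        (Finset.mem_range.mpr hn)
    calc (M n : ℝ) ≤ C := by rw [hCdef]; linarith
    _ = C * 1 := (mul_one C).symm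
    _ ≤ C * (2:ℝ) ^ (β * (n:ℝ) * τ) := by
        exact mul_le_mul_of_nonneg_left hone_le hCpos.le
  · push_neg at hn
    have hn1 : n₁ ≤ n := le_trans (le_max_left _ _) hn
    have hn2 : n₂ ≤ n := le_trans (le_max_right _ _) hn
    set εn : ℝ := (2:ℝ) ^ (-(β * (n:ℝ) + 3)) with hεndef
    have hεnpos : 0 < εn := hrpos _
    have hβn_ge : (n:ℝ) ≤ β * n := le_mul_of_one_le_left (Nat.cast_nonneg n) hβge1
    have hεn_lt : εn < ε₀ := by
      have e1 : εn ≤ (2:ℝ) ^ (-(n:ℝ)) := hrp (by linarith)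
      have e2 : (2:ℝ) ^ (-(n:ℝ)) ≤ 1 / ((n:ℝ) + 1) := by
        rw [Real.rpow_neg two_pos.le, Real.rpow_natCast 2 n, inv_eq_one_div]
        apply one_div_le_one_div_of_le (by positivity)
        have h9 : n + 1 ≤ 2 ^ n := Nat.succ_le_of_lt (Nat.lt_two_pow_self (n := n))
        exact_mod_cast h9
      have e3 : 1 / ((n:ℝ) + 1) < ε₀ := by
        rw [div_lt_iff₀ (by positivity)]
        have h4 : 1 / ε₀ ≤ (n₁ : ℝ) := Nat.le_ceil _
        have h5 : (n₁ : ℝ) ≤ (n : ℝ) := by exact_mod_cast hn1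
        rw [div_le_iff₀ hε₀pos] at h4
        nlinarith
      linarith
    obtain ⟨V, hVfd, hVrank, hVdist⟩ := hε₀ εn hεnpos hεn_lt
    haveI := hVfd
    obtain ⟨f, hf1, hf2⟩ := auerbach_dual V
    obtain ⟨φ, hφn, hφc⟩ := exists_phi _ f hf1
    have hd2 : ((Module.finrank ℝ V : ℝ)) ≤ (2:ℝ) ^ (τ'' * (β * (n:ℝ) + 3)) := by
      have heq : εn ^ (-τ'') = (2:ℝ) ^ (τ'' * (β * (n:ℝ) + 3)) := by
        rw [hεndef, ← Real.rpow_mul two_pos.le]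
        congr 1
        ring
      rw [← heq]
      exact hVrank
    refine ⟨Module.finrank ℝ V, ?_, φ, hφn, ?_⟩
    · -- dimension bound
      have h6 : τ'' * (β * (n:ℝ) + 3) ≤ β * (n:ℝ) * τ + 3 := by
        have hβn0 : 0 ≤ β * (n:ℝ) := by positivity
        nlinarith
      have h7 : (2:ℝ) ^ (β * (n:ℝ) * τ + 3) = 8 * (2:ℝ) ^ (β * (n:ℝ) * τ) := by
        rw [Real.rpow_add two_pos]
        rw [show (3:ℝ) = ((3:ℕ):ℝ) by norm_num, Real.rpow_natCast]
        ring
      calc ((Module.finrank ℝ V : ℝ)) ≤ (2:ℝ) ^ (τ'' * (β * (n:ℝ) + 3)) := hd2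
      _ ≤ (2:ℝ) ^ (β * (n:ℝ) * τ + 3) := hrp h6
      _ = 8 * (2:ℝ) ^ (β * (n:ℝ) * τ) := h7
      _ ≤ C * (2:ℝ) ^ (β * (n:ℝ) * τ) :=
          mul_le_mul_of_nonneg_right hC8 (hrpos _).le
    · -- separation
      have hpos2 : 0 < (τ - τ'') * β := mul_pos (by linarith) hβpos
      have hn2' : (3 * τ'' + 1) / ((τ - τ'') * β) ≤ (n:ℝ) :=
        le_trans (Nat.le_ceil _) (by exact_mod_cast hn2)
      rw [div_le_iff₀ hpos2] at hn2'
      have hexpkey : τ'' * (β * (n:ℝ) + 3) ≤ τ * β * (n:ℝ) - 1 := by nlinarith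
      have hkey : ((Module.finrank ℝ V : ℝ)) ≤ (2:ℝ) ^ (τ * β * (n:ℝ) - 1) :=
        hd2.trans (hrp hexpkey)
      intro x hx y hy hxy
      have hVne : ((V : Set B)).Nonempty := ⟨0, by simp⟩
      have hεn_lt2 : εn < (2:ℝ) ^ (-(β * (n:ℝ) + 2)) :=
        Real.rpow_lt_rpow_of_exponent_lt one_lt_two (by linarith)
      obtain ⟨v, hvV, hv⟩ := (Metric.infDist_lt_iff hVne).mp
        (lt_of_le_of_lt (hVdist x hx) hεn_lt2)
      obtain ⟨w, hwV, hw⟩ := (Metric.infDist_lt_iff hVne).mp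
        (lt_of_le_of_lt (hVdist y hy) hεn_lt2)
      have huV : v - w ∈ V := V.sub_mem hvV hwV
      have hdub : (2:ℝ) ^ (-(β * (n:ℝ) + 2)) + (2:ℝ) ^ (-(β * (n:ℝ) + 2))
          = (2:ℝ) ^ (-(β * (n:ℝ) + 1)) := by
        rw [← two_mul, show -(β * (n:ℝ) + 1) = 1 + -(β * (n:ℝ) + 2) by ring,
          Real.rpow_add two_pos, Real.rpow_one]
      have happrox : ‖(x - y) - (v - w)‖ < (2:ℝ) ^ (-(β * (n:ℝ) + 1)) := by
        have h1 : (x - y) - (v - w) = (x - v) - (y - w) := sub_sub_sub_comm x y v w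
        rw [h1, ← hdub]
        calc ‖(x - v) - (y - w)‖ ≤ ‖x - v‖ + ‖y - w‖ := norm_sub_le _ _
        _ < _ := by
            apply add_lt_add
            · rw [← dist_eq_norm]; exact hv
            · rw [← dist_eq_norm]; exact hw
      have hu_low : (2:ℝ) ^ (-((n:ℝ) + 1)) ≤ ‖v - w‖ := by
        have h1 : ‖x - y‖ - ‖(x - y) - (v - w)‖ ≤ ‖v - w‖ := by
          have h2 := norm_sub_norm_le (x - y) ((x - y) - (v - w))
          simpa [sub_sub_cancel] using h2
        have h2 : (2:ℝ) ^ (-(β * (n:ℝ) + 1)) ≤ (2:ℝ) ^ (-((n:ℝ) + 1)) := hrp (by linarith)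
        have h3 : (2:ℝ) ^ (-((n:ℝ) + 1)) + (2:ℝ) ^ (-((n:ℝ) + 1)) = (2:ℝ) ^ (-(n:ℝ)) := by
          rw [← two_mul, show -(n:ℝ) = 1 + -((n:ℝ) + 1) by ring,
            Real.rpow_add two_pos, Real.rpow_one]
        have h4 := happrox.le.trans h2
        linarith
      have hupos : (0:ℝ) < ‖v - w‖ := lt_of_lt_of_le (hrpos _) hu_low
      have hd_pos : 0 < Module.finrank ℝ V := by
        rcases Nat.eq_zero_or_pos (Module.finrank ℝ V) with h0 | h
        · exfalso
          haveI : IsEmpty (Fin (Module.finrank ℝ V)) := by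
            rw [h0]; infer_instance
          have h5 := hf2 (v - w) huV
          rw [Finset.univ_eq_empty, Finset.sum_empty] at h5
          linarith
        · exact h
      haveI : Nonempty (Fin (Module.finrank ℝ V)) := Fin.pos_iff_nonempty.mp hd_pos
      have hex : ∃ i, ‖v - w‖ / (Module.finrank ℝ V : ℝ) ≤ |f i (v - w)| := by
        by_contra hcon
        push_neg at hcon
        have hlt : ∑ i, |f i (v - w)| <
            ∑ _i : Fin (Module.finrank ℝ V), ‖v - w‖ / (Module.finrank ℝ V : ℝ) :=
          Finset.sum_lt_sum_of_nonempty Finset.univ_nonempty (fun i _ => hcon i)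
        rw [Finset.sum_const, Finset.card_univ, Fintype.card_fin, nsmul_eq_mul,
          mul_div_cancel₀] at hlt
        · linarith [hf2 (v - w) huV]
        · exact_mod_cast hd_pos.ne'
      obtain ⟨i, hi⟩ := hex
      have hfix : |f i ((x - y) - (v - w))| ≤ (2:ℝ) ^ (-(β * (n:ℝ) + 1)) := by
        calc |f i ((x - y) - (v - w))| = ‖f i ((x - y) - (v - w))‖ := (Real.norm_eq_abs _).symm
        _ ≤ ‖f i‖ * ‖(x - y) - (v - w)‖ := (f i).le_opNorm _
        _ ≤ 1 * (2:ℝ) ^ (-(β * (n:ℝ) + 1)) :=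
            mul_le_mul (hf1 i) happrox.le (norm_nonneg _) zero_le_one
        _ = _ := one_mul _
      have hdiv : 2 * (2:ℝ) ^ (-(β * (n:ℝ) + 1)) ≤ ‖v - w‖ / (Module.finrank ℝ V : ℝ) := by
        have hb : (2:ℝ) ^ (-((n:ℝ) + 1)) / (2:ℝ) ^ (τ * β * (n:ℝ) - 1)
            = 2 * (2:ℝ) ^ (-(β * (n:ℝ) + 1)) := by
          rw [← Real.rpow_sub two_pos,
            show -((n:ℝ) + 1) - (τ * β * (n:ℝ) - 1) = 1 + -(β * (n:ℝ) + 1) by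
              linear_combination (n:ℝ) * hβeq,
            Real.rpow_add two_pos, Real.rpow_one]
        rw [← hb]
        apply div_le_div₀ hupos.le hu_low ?_ hkey
        exact_mod_cast hd_pos
      have hsplit2 : f i (v - w) = f i (x - y) - f i ((x - y) - (v - w)) := by
        rw [← map_sub]
        congr 1
        abel
      have habs : |f i (v - w)| - |f i ((x - y) - (v - w))| ≤ |f i (x - y)| := by
        have h10 : |f i (v - w)| ≤ |f i (x - y)| + |f i ((x - y) - (v - w))| := by
          rw [hsplit2, sub_eq_add_neg]
          refine (abs_add_le _ _).trans ?_
          rw [abs_neg]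
        linarith
      have hfinal : (2:ℝ) ^ (-(β * (n:ℝ) + 1)) ≤ |f i (x - y)| := by linarith
      exact hfinal.trans (hφc (x - y) i)
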